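/- arXiv:1209.4691 — 2 statements merged into one kernel-verified Lean document; each statement's English description precedes it below -/
import Mathlib

section
/- Let ω be an infinite word over a finite integer alphabet with bounded additive complexity, and suppose slope(ω) = p/q where p and q ≥ 1 are relatively prime integers. Then there exists K ∈ ℕ such that every additive k-power that is a factor of ω with k ≥ K has slope p/q. -/
/-- `B` is a factor of the infinite word `ω`. -/
def Factor (ω : ℕ → ℤ) (B : List ℤ) : Prop :=
  ∃ m : ℕ, B = (List.range B.length).map (fun i => ω (m + i))

/-- `ω` has bounded additive complexity: there is `M` such that for every `n ≥ 1`
the set of sums of factors of length `n` has at most `M` elements. -/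
def BoundedAddComplexity (ω : ℕ → ℤ) : Prop :=
  ∃ M : ℕ, ∀ n : ℕ, 1 ≤ n →
    ∃ T : Finset ℤ, T.card ≤ M ∧
      ∀ B : List ℤ, Factor ω B → B.length = n → B.sum ∈ T

/-- The slope of a finite word. -/
def wordSlope (B : List ℤ) : ℚ := (B.sum : ℚ) / (B.length : ℚ)

/-- `ω` has slope `L`. -/
def HasSlope (ω : ℕ → ℤ) (L : ℝ) : Prop :=
  Filter.Tendsto (fun n : ℕ => (∑ i ∈ Finset.range n, (ω i : ℝ)) / n)
    Filter.atTop (nhds L)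

/-- `W` is an additive `k`-power: a concatenation of `k` nonempty blocks of equal
length and equal sum. -/
def AdditivePower (k : ℕ) (W : List ℤ) : Prop :=
  ∃ L : List (List ℤ), L.length = k ∧ W = L.flatten ∧
    ∃ l : ℕ, 1 ≤ l ∧ ∃ s : ℤ, ∀ B ∈ L, B.length = l ∧ B.sum = s

private lemma listsum_range (g : ℕ → ℤ) (n : ℕ) :
    ((List.range n).map g).sum = ∑ i ∈ Finset.range n, g i := by
  induction n with
  | zero => simp
  | succ n ih =>
    rw [List.range_succ, Finset.sum_range_succ, List.map_append, List.sum_append]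
    simp [ih]

private lemma sum_shift (ω : ℕ → ℤ) (m k : ℕ) :
    ∑ i ∈ Finset.range k, ω (m + i) =
      (∑ i ∈ Finset.range (m + k), ω i) - ∑ i ∈ Finset.range m, ω i := by
  induction k with
  | zero => simp
  | succ k ih =>
    rw [Finset.sum_range_succ, ih, show m + (k + 1) = (m + k) + 1 from rfl,
      Finset.sum_range_succ]
    ring

private lemma my_ivt (f : ℕ → ℤ) (d : ℤ) (hstep : ∀ m, |f (m + 1) - f m| ≤ d)
    (a b : ℕ) (c : ℤ) (ha : f a ≤ c) (hb : c < f b) :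
    ∃ m, c < f m ∧ f m ≤ c + d := by
  classical
  rcases le_or_gt b a with hba | hab
  · have hPm : c < f (Nat.findGreatest (fun m => c < f m) a) :=
      Nat.findGreatest_spec (P := fun m => c < f m) hba hb
    set m := Nat.findGreatest (fun m => c < f m) a with hm
    have hma : m ≤ a := Nat.findGreatest_le a
    have hlt : m < a := lt_of_le_of_ne hma (fun h => absurd (h ▸ hPm) (not_lt.2 ha))
    have h1 : ¬ (c < f (m + 1)) :=
      Nat.findGreatest_is_greatest (Nat.lt_succ_self m) hlt
    have h2 := abs_le.1 (hstep m)
    exact ⟨m, hPm, by push_neg at h1; linarith [h2.2]⟩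
  · have hex : ∃ m, a ≤ m ∧ c < f m := ⟨b, le_of_lt hab, hb⟩
    obtain ⟨ham, hPm⟩ := Nat.find_spec hex
    have hne : Nat.find hex ≠ a := fun h => absurd (h ▸ hPm) (not_lt.2 ha)
    have hm1 : a ≤ Nat.find hex - 1 := by omega
    have hnot := Nat.find_min hex (show Nat.find hex - 1 < Nat.find hex by omega)
    push_neg at hnot
    have h3 : f (Nat.find hex - 1) ≤ c := hnot hm1
    have h2 := abs_le.1 (hstep (Nat.find hex - 1))
    rw [show Nat.find hex - 1 + 1 = Nat.find hex by omega] at h2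
    exact ⟨Nat.find hex, hPm, by linarith [h2.2]⟩

private lemma my_diam : ∀ (n : ℕ) (S : Finset ℤ) (hS : S.Nonempty) (d : ℤ), 0 ≤ d →
    S.card = n →
    (∀ v ∈ S, v < S.max' hS → ∃ u ∈ S, v < u ∧ u ≤ v + d) →
    S.max' hS - S.min' hS ≤ d * ((S.card : ℤ) - 1) := by
  intro n
  induction n with
  | zero =>
    intro S hS d hd hcard _
    exact absurd hcard (Finset.card_ne_zero_of_mem hS.choose_spec)
  | succ n ih =>
    intro S hS d hd hcard h
    set a := S.min' hS with hadef
    set b := S.max' hS with hbdef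
    rcases lt_or_ge a b with hab | hab
    · obtain ⟨u, huS, hau, hud⟩ := h a (S.min'_mem hS) hab
      set S' := S.erase a with hS'def
      have hu' : u ∈ S' := Finset.mem_erase.2 ⟨ne_of_gt hau, huS⟩
      have hS' : S'.Nonempty := ⟨u, hu'⟩
      have hcard' : S'.card = n := by
        rw [hS'def, Finset.card_erase_of_mem (S.min'_mem hS), hcard]
        omega
      have hbS' : b ∈ S' := Finset.mem_erase.2 ⟨hab.ne', S.max'_mem hS⟩
      have hmax' : S'.max' hS' = b := by
        apply le_antisymm
        · exact S.le_max' _ (Finset.mem_of_mem_erase (S'.max'_mem hS'))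
        · exact S'.le_max' b hbS'
      have hprop' : ∀ v ∈ S', v < S'.max' hS' → ∃ w ∈ S', v < w ∧ w ≤ v + d := by
        intro v hv hvmax
        have hvS := Finset.mem_of_mem_erase hv
        have hva : a < v := lt_of_le_of_ne (S.min'_le v hvS) (Ne.symm (Finset.mem_erase.1 hv).1)
        rw [hmax'] at hvmax
        obtain ⟨w, hwS, hw1, hw2⟩ := h v hvS hvmax
        exact ⟨w, Finset.mem_erase.2 ⟨ne_of_gt (lt_trans hva hw1), hwS⟩, hw1, hw2⟩
      have hih := ih S' hS' d hd hcard' hprop'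
      have hmin' : S'.min' hS' ≤ a + d := le_trans (S'.min'_le u hu') hud
      have hminS : a ≤ S'.min' hS' := S.min'_le _ (Finset.mem_of_mem_erase (S'.min'_mem hS'))
      rw [hmax'] at hih
      have hcast : (S.card : ℤ) = (S'.card : ℤ) + 1 := by rw [hcard, hcard']; push_cast; ring
      have hring : d * ((S'.card : ℤ) + 1 - 1) = d * ((S'.card : ℤ) - 1) + d := by ring
      rw [hcast, hring]
      linarith
    · have : b - a ≤ 0 := by linarith
      have h1 : (1 : ℤ) ≤ (S.card : ℤ) := by exact_mod_cast hS.card_pos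
      nlinarith

private lemma flatten_stats (l : ℕ) (s : ℤ) : ∀ (L : List (List ℤ)),
    (∀ B ∈ L, B.length = l ∧ B.sum = s) →
    L.flatten.length = L.length * l ∧ L.flatten.sum = (L.length : ℤ) * s := by
  intro L hL
  induction L with
  | nil => simp
  | cons B L ih =>
    obtain ⟨h1, h2⟩ := hL B List.mem_cons_self
    obtain ⟨ih1, ih2⟩ := ih (fun B' h => hL B' (List.mem_cons_of_mem _ h))
    constructor
    · simp [List.flatten_cons, ih1, h1]; ring
    · simp [List.flatten_cons, ih2, h2]; ring

private lemma key (ω : ℕ → ℤ) (hfin : (Set.range ω).Finite) (hb : BoundedAddComplexity ω)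
    (p q : ℤ) (hq : 1 ≤ q) (hs : HasSlope ω ((p : ℝ) / (q : ℝ))) :
    ∃ C : ℤ, ∀ n : ℕ, 1 ≤ n → ∀ m : ℕ,
      |(∑ i ∈ Finset.range n, ω (m + i)) * q - (n : ℤ) * p| ≤ C * q := by
  classical
  obtain ⟨M, hM⟩ := hb
  obtain ⟨U, hU⟩ := hfin.bddAbove
  obtain ⟨V, hV⟩ := hfin.bddBelow
  set A : ℤ := max U (-V) with hAdef
  have hA : ∀ i, |ω i| ≤ A := by
    intro i
    have h1 : ω i ≤ U := hU (Set.mem_range_self i)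
    have h2 : V ≤ ω i := hV (Set.mem_range_self i)
    have := le_max_left U (-V)
    have := le_max_right U (-V)
    rw [abs_le]; constructor <;> linarith
  have hA0 : 0 ≤ A := le_trans (abs_nonneg _) (hA 0)
  set d : ℤ := 2 * A with hddef
  have hd : 0 ≤ d := by linarith
  refine ⟨d * ((M : ℤ) - 1), ?_⟩
  intro n hn m0
  set f : ℕ → ℤ := fun m => ∑ i ∈ Finset.range n, ω (m + i) with hfdef
  have hstep : ∀ m, |f (m + 1) - f m| ≤ d := by
    intro m
    have e : f (m + 1) - f m = ω (m + n) - ω m := by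
      simp only [hfdef]
      rw [sum_shift ω (m + 1) n, sum_shift ω m n, show m + 1 + n = (m + n) + 1 by omega,
        Finset.sum_range_succ, Finset.sum_range_succ]
      ring
    rw [e]
    have h1 := abs_le.1 (hA (m + n))
    have h2 := abs_le.1 (hA m)
    rw [abs_le]; constructor <;> [linarith [h1.1, h2.2]; linarith [h1.2, h2.1]]
  obtain ⟨T, hTcard, hTmem⟩ := hM n hn
  have hfT : ∀ m, f m ∈ T := by
    intro m
    have hfac : Factor ω ((List.range n).map (fun i => ω (m + i))) :=
      ⟨m, by rw [List.length_map, List.length_range]⟩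
    have := hTmem _ hfac (by rw [List.length_map, List.length_range])
    rwa [listsum_range] at this
  set S : Finset ℤ := T.filter (fun v => ∃ m, f m = v) with hSdef
  have hfS : ∀ m, f m ∈ S := fun m => Finset.mem_filter.2 ⟨hfT m, m, rfl⟩
  have hS : S.Nonempty := ⟨f 0, hfS 0⟩
  have hprop : ∀ v ∈ S, v < S.max' hS → ∃ u ∈ S, v < u ∧ u ≤ v + d := by
    intro v hv hvb
    obtain ⟨hvT, mv, hmv⟩ := Finset.mem_filter.1 hv
    obtain ⟨hbT, mb, hmb⟩ := Finset.mem_filter.1 (S.max'_mem hS)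
    obtain ⟨m, h1, h2⟩ := my_ivt f d hstep mv mb v (le_of_eq hmv) (hmb ▸ hvb)
    exact ⟨f m, hfS m, h1, h2⟩
  have hdiam := my_diam S.card S hS d hd rfl hprop
  have hcard : S.card ≤ M := le_trans (Finset.card_le_card (Finset.filter_subset _ T)) hTcard
  have hCb : S.max' hS - S.min' hS ≤ d * ((M : ℤ) - 1) := by
    refine le_trans hdiam (mul_le_mul_of_nonneg_left ?_ hd)
    have : ((S.card : ℤ)) ≤ (M : ℤ) := by exact_mod_cast hcard
    linarith
  -- telescoping sums
  have hsum : ∀ k : ℕ, (∑ i ∈ Finset.range (k * n), ω i) = ∑ j ∈ Finset.range k, f (j * n) := by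
    intro k
    induction k with
    | zero => simp
    | succ k ih =>
      rw [Finset.sum_range_succ, ← ih, show (k + 1) * n = k * n + n by ring]
      have h := sum_shift ω (k * n) n
      simp only [hfdef]
      linarith [h]
  have hlow : ∀ k : ℕ, (k : ℤ) * S.min' hS ≤ ∑ i ∈ Finset.range (k * n), ω i := by
    intro k
    rw [hsum k]
    have := Finset.card_nsmul_le_sum (Finset.range k) (fun j => f (j * n)) (S.min' hS)
      (fun j _ => S.min'_le _ (hfS (j * n)))
    simpa [nsmul_eq_mul, mul_comm] using this
  have hhigh : ∀ k : ℕ, (∑ i ∈ Finset.range (k * n), ω i) ≤ (k : ℤ) * S.max' hS := by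
    intro k
    rw [hsum k]
    have := Finset.sum_le_card_nsmul (Finset.range k) (fun j => f (j * n)) (S.max' hS)
      (fun j _ => S.le_max' _ (hfS (j * n)))
    simpa [nsmul_eq_mul, mul_comm] using this
  -- the limit
  have hmn : Filter.Tendsto (fun k : ℕ => k * n) Filter.atTop Filter.atTop := by
    apply Filter.tendsto_atTop_atTop_of_monotone (fun x y h => Nat.mul_le_mul_right n h)
    exact fun x => ⟨x, Nat.le_mul_of_pos_right x (by omega)⟩
  have htend : Filter.Tendsto
      (fun k : ℕ => ((∑ i ∈ Finset.range (k * n), ω i : ℤ) : ℝ) / k)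
      Filter.atTop (nhds (((p : ℝ) / q) * n)) := by
    have h1 := (hs.comp hmn).mul_const (n : ℝ)
    refine Filter.Tendsto.congr' ?_ h1
    filter_upwards [Filter.eventually_ge_atTop 1] with k hk
    have hk0 : (k : ℝ) ≠ 0 := by
      have : (0 : ℝ) < k := by exact_mod_cast Nat.lt_of_lt_of_le Nat.zero_lt_one hk
      exact ne_of_gt this
    have hn0 : (n : ℝ) ≠ 0 := by
      have : (0 : ℝ) < n := by exact_mod_cast Nat.lt_of_lt_of_le Nat.zero_lt_one hn
      exact ne_of_gt this
    simp only [Function.comp]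
    push_cast
    field_simp
  have hle1 : S.min' hS ≤ ((p : ℝ) / q) * n := by
    refine ge_of_tendsto htend ?_
    filter_upwards [Filter.eventually_ge_atTop 1] with k hk
    have hk0 : (0 : ℝ) < k := by exact_mod_cast Nat.lt_of_lt_of_le Nat.zero_lt_one hk
    rw [le_div_iff₀ hk0]
    have h := hlow k
    rw [mul_comm] at h
    exact_mod_cast h
  have hle2 : ((p : ℝ) / q) * n ≤ S.max' hS := by
    refine le_of_tendsto htend ?_
    filter_upwards [Filter.eventually_ge_atTop 1] with k hk
    have hk0 : (0 : ℝ) < k := by exact_mod_cast Nat.lt_of_lt_of_le Nat.zero_lt_one hk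
    rw [div_le_iff₀ hk0]
    have h := hhigh k
    rw [mul_comm ((k:ℤ))] at h
    exact_mod_cast h
  -- conclude
  have hmem := hfS m0
  have hlo : (S.min' hS : ℝ) ≤ (f m0 : ℝ) := by exact_mod_cast S.min'_le _ hmem
  have hhi : (f m0 : ℝ) ≤ (S.max' hS : ℝ) := by exact_mod_cast S.le_max' _ hmem
  have hCr : (S.max' hS : ℝ) - S.min' hS ≤ (d * ((M : ℤ) - 1) : ℤ) := by exact_mod_cast hCb
  have hq0 : (0 : ℝ) < (q : ℝ) := by exact_mod_cast (lt_of_lt_of_le Int.zero_lt_one hq)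
  have e1 : (f m0 : ℝ) * q - (n : ℝ) * p = ((f m0 : ℝ) - ((p : ℝ) / q) * n) * q := by
    field_simp
  have hreal : |(f m0 : ℝ) * q - (n : ℝ) * p| ≤ ((d * ((M : ℤ) - 1) : ℤ) : ℝ) * q := by
    set C' : ℝ := ((d * ((M : ℤ) - 1) : ℤ) : ℝ) with hC'
    have k1 : (f m0 : ℝ) - ((p : ℝ) / q) * n ≤ C' := by linarith
    have k2 : -C' ≤ (f m0 : ℝ) - ((p : ℝ) / q) * n := by linarith
    have k3 := mul_le_mul_of_nonneg_right k1 hq0.le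
    have k4 := mul_le_mul_of_nonneg_right k2 hq0.le
    rw [abs_le]
    constructor <;> [nlinarith [k4, e1]; nlinarith [k3, e1]]
  exact_mod_cast hreal

/-- If ω has bounded additive complexity and rational slope p/q, then all additive
k-powers in ω for large enough k have slope p/q. -/
theorem stmt4 (ω : ℕ → ℤ) (hfin : (Set.range ω).Finite)
    (hb : BoundedAddComplexity ω) (p q : ℤ) (hq : 1 ≤ q) (hpq : IsCoprime p q)
    (hs : HasSlope ω ((p : ℝ) / (q : ℝ))) :
    ∃ K : ℕ, ∀ k : ℕ, K ≤ k → ∀ W : List ℤ, Factor ω W → AdditivePower k W →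
      wordSlope W = (p : ℚ) / (q : ℚ) := by

  obtain ⟨C, hC⟩ := key ω hfin hb p q hq hs
  refine ⟨(C * q).toNat + 1, ?_⟩
  intro k hk W hW hP
  obtain ⟨L, hLlen, hWL, l, hl, s, hB⟩ := hP
  obtain ⟨hflen, hfsum⟩ := flatten_stats l s L hB
  have hWlen : W.length = k * l := by rw [hWL, hflen, hLlen]
  have hWsum : W.sum = (k : ℤ) * s := by rw [hWL, hfsum, hLlen]
  have hk1 : 1 ≤ k := le_trans (Nat.le_add_left 1 _) hk
  have hn1 : 1 ≤ k * l := Nat.one_le_iff_ne_zero.2 (by positivity)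
  obtain ⟨m, hm⟩ := hW
  have hWsum2 : W.sum = ∑ i ∈ Finset.range (k * l), ω (m + i) := by
    conv_lhs => rw [hm]
    rw [listsum_range, hWlen]
  have hbound := hC (k * l) hn1 m
  rw [← hWsum2, hWsum] at hbound
  have hfac : ((k : ℤ)) * |s * q - (l : ℤ) * p| ≤ C * q := by
    calc ((k : ℤ)) * |s * q - (l : ℤ) * p| = |(k : ℤ) * (s * q - (l : ℤ) * p)| := by
          rw [abs_mul, abs_of_nonneg (by positivity : (0:ℤ) ≤ (k:ℤ))]
      _ = |(k : ℤ) * s * q - ((k * l : ℕ) : ℤ) * p| := by push_cast; ring_nf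
      _ ≤ C * q := hbound
  have heq : s * q = (l : ℤ) * p := by
    by_contra hne
    have h1 : (1 : ℤ) ≤ |s * q - (l : ℤ) * p| := by
      rcases abs_pos.2 (sub_ne_zero.2 hne) with h
      omega
    have hkk : (k : ℤ) ≤ C * q := by calc (k:ℤ) = k * 1 := by ring
      _ ≤ (k : ℤ) * |s * q - (l : ℤ) * p| := by
          apply mul_le_mul_of_nonneg_left h1 (by positivity)
      _ ≤ C * q := hfac
    have hkK : ((C * q).toNat + 1 : ℤ) ≤ (k : ℤ) := by exact_mod_cast hk
    have := Int.self_le_toNat (C * q)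
    omega
  -- compute the slope
  have hk0 : ((k : ℚ)) ≠ 0 := by positivity
  have hl0 : ((l : ℚ)) ≠ 0 := by
    have : 0 < l := hl
    positivity
  have hq0 : ((q : ℚ)) ≠ 0 := by
    have : (0:ℤ) < q := by omega
    intro h; exact absurd (by exact_mod_cast h : q = 0) (by omega)
  rw [wordSlope, hWsum, hWlen]
  rw [div_eq_div_iff (by push_cast; positivity) hq0]
  push_cast
  have heqQ : (s : ℚ) * q = (l : ℚ) * p := by exact_mod_cast heq
  linear_combination (k : ℚ) * heqQ
end

section
/- Let ω be an infinite word over a finite integer alphabet with bounded additive complexity (so slope(ω) exists). Then slope(ω) is rational if and only if there exists a strictly increasing sequence of natural numbers n₀ < n₁ < n₂ < ⋯ such that all of the consecutive blocks B_i = (ω(n_{i−1}), ω(n_{i−1}+1), …, ω(n_i − 1)), i ≥ 1, have the same slope. Moreover, in that case the common slope of the blocks equals slope(ω). -/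
/-- The block of ω on positions `a, a+1, …, b-1`. -/
def seg (ω : ℕ → ℤ) (a b : ℕ) : List ℤ := (List.range (b - a)).map (fun j => ω (a + j))

noncomputable def pS (ω : ℕ → ℤ) (n : ℕ) : ℤ := ∑ i ∈ Finset.range n, ω i

lemma list_sum_range (f : ℕ → ℤ) (n : ℕ) :
    ((List.range n).map f).sum = ∑ i ∈ Finset.range n, f i := by
  induction n with
  | zero => simp
  | succ k ih =>
    rw [List.range_succ, Finset.sum_range_succ, List.map_append, List.sum_append, ih]; simp

lemma seg_length (ω : ℕ → ℤ) (a b : ℕ) : (seg ω a b).length = b - a := by simp [seg]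

lemma seg_factor (ω : ℕ → ℤ) (a b : ℕ) : Factor ω (seg ω a b) := ⟨a, by simp [seg]⟩

lemma seg_sum (ω : ℕ → ℤ) (a b : ℕ) (h : a ≤ b) :
    (seg ω a b).sum = pS ω b - pS ω a := by
  have hb : b = a + (b - a) := by omega
  rw [hb]
  simp only [seg, Nat.add_sub_cancel_left, pS, list_sum_range]
  rw [Finset.sum_range_add]
  ring

lemma cross {w : ℕ → ℤ} {K : ℤ} (hstep : ∀ j, |w (j + 1) - w j| ≤ K)
    (t : ℤ) : ∀ b a, a ≤ b → w a < t → t ≤ w b →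
    ∃ j, a ≤ j ∧ j ≤ b ∧ t ≤ w j ∧ w j < t + K := by
  intro b
  induction b with
  | zero => intro a hab h1 h2; interval_cases a; omega
  | succ b ih =>
    intro a hab h1 h2
    rcases Nat.eq_or_lt_of_le hab with rfl | hlt
    · omega
    have hab' : a ≤ b := by omega
    by_cases ht : t ≤ w b
    · obtain ⟨j, hj1, hj2, hj3, hj4⟩ := ih a hab' h1 ht
      exact ⟨j, hj1, by omega, hj3, hj4⟩
    · have hb := abs_le.mp (hstep b)
      exact ⟨b + 1, by omega, le_refl _, h2, by omega⟩

lemma gap_le {w : ℕ → ℤ} {K : ℤ} (hK : 0 ≤ K) (hstep : ∀ j, |w (j + 1) - w j| ≤ K)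
    {T : Finset ℤ} (hT : ∀ j, w j ∈ T) (a b : ℕ) (hab : a ≤ b) :
    w b - w a ≤ K * T.card := by
  by_contra hcon
  push_neg at hcon
  set M := T.card with hM
  have hK1 : 1 ≤ K := by
    rcases eq_or_lt_of_le hK with rfl | h
    · have hconst : ∀ j, a ≤ j → w j = w a := by
        intro j hj
        induction j with
        | zero =>
          have : a = 0 := by omega
          rw [this]
        | succ k ih =>
          rcases Nat.eq_or_lt_of_le hj with h' | h'
          · rw [h']
          · have hk := abs_le.mp (hstep k)
            have := ih (by omega)
            omega
      have := hconst b hab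
      simp at hcon
      omega
    · omega
  have hcross : ∀ r : Fin (M + 1), ∃ j, a ≤ j ∧ j ≤ b ∧
      (w a + 1 + K * r) ≤ w j ∧ w j < (w a + 1 + K * r) + K := by
    intro r
    apply cross hstep _ b a hab
    · nlinarith [hK1, Int.natCast_nonneg (r : ℕ)]
    · have hr : (r : ℤ) ≤ M := by exact_mod_cast Nat.lt_succ_iff.mp r.2
      nlinarith
  choose j hj1 hj2 hj3 hj4 using hcross
  have key : ∀ r r' : Fin (M + 1), (r : ℕ) < (r' : ℕ) → w (j r) ≠ w (j r') := by
    intro r r' hlt heq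
    have h3 := hj3 r'
    have h4 := hj4 r
    have hc : (r : ℤ) + 1 ≤ (r' : ℤ) := by exact_mod_cast hlt
    nlinarith
  have hinj : Set.InjOn (fun r : Fin (M + 1) => w (j r)) (Finset.univ : Finset (Fin (M + 1))) := by
    intro r _ r' _ h
    rcases lt_trichotomy (r : ℕ) (r' : ℕ) with hh | hh | hh
    · exact absurd h (key r r' hh)
    · exact Fin.ext hh
    · exact absurd h.symm (key r' r hh)
  have hcard : M + 1 ≤ T.card := by
    have := Finset.card_le_card_of_injOn (fun r : Fin (M + 1) => w (j r))
      (fun r _ => hT (j r)) hinj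
    simpa using this
  omega

lemma gap_abs {w : ℕ → ℤ} {K : ℤ} (hK : 0 ≤ K) (hstep : ∀ j, |w (j + 1) - w j| ≤ K)
    {T : Finset ℤ} (hT : ∀ j, w j ∈ T) (a b : ℕ) :
    w b - w a ≤ K * T.card := by
  rcases le_total a b with h | h
  · exact gap_le hK hstep hT a b h
  · set w' : ℕ → ℤ := fun j => w (a - j) with hw'
    have hstep' : ∀ j, |w' (j + 1) - w' j| ≤ K := by
      intro j
      by_cases hj : j < a
      · have h1 : a - j = (a - (j + 1)) + 1 := by omega
        have := hstep (a - (j + 1))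
        rw [← h1] at this
        simpa [hw', abs_sub_comm] using this
      · have h1 : a - j = 0 := by omega
        have h2 : a - (j + 1) = 0 := by omega
        simp [hw', h1, h2, hK]
    have := gap_le hK hstep' (fun j => hT (a - j)) 0 (a - b) (Nat.zero_le _)
    have h1 : a - (a - b) = b := by omega
    simpa [hw', h1] using this

/-- For ω with bounded additive complexity, the slope is rational iff ω factors (after
a prefix) as consecutive blocks all of the same slope; moreover the common slope equals
the slope of ω. -/
theorem stmt8 (ω : ℕ → ℤ) (hfin : (Set.range ω).Finite)
    (hb : BoundedAddComplexity ω) (L : ℝ) (hs : HasSlope ω L) :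
    ((∃ α : ℚ, (α : ℝ) = L) ↔
      ∃ n : ℕ → ℕ, StrictMono n ∧
        ∀ i : ℕ, wordSlope (seg ω (n i) (n (i + 1))) = wordSlope (seg ω (n 0) (n 1)))
    ∧ ∀ n : ℕ → ℕ, StrictMono n →
        (∀ i : ℕ, wordSlope (seg ω (n i) (n (i + 1))) = wordSlope (seg ω (n 0) (n 1))) →
        ((wordSlope (seg ω (n 0) (n 1)) : ℝ) = L) := by
  set S := pS ω with hS
  -- reformulated slope hypothesis
  have hs' : Filter.Tendsto (fun m : ℕ => (S m : ℝ) / m) Filter.atTop (nhds L) := by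
    have : ∀ m : ℕ, (S m : ℝ) = ∑ i ∈ Finset.range m, (ω i : ℝ) := by
      intro m; simp [hS, pS]
    simpa [this, HasSlope] using hs
  -- the "moreover" part
  have moreover : ∀ n : ℕ → ℕ, StrictMono n →
      (∀ i : ℕ, wordSlope (seg ω (n i) (n (i + 1))) = wordSlope (seg ω (n 0) (n 1))) →
      ((wordSlope (seg ω (n 0) (n 1)) : ℝ) = L) := by
    intro n hmono hslope
    set β := wordSlope (seg ω (n 0) (n 1)) with hβ
    have hblock : ∀ i : ℕ, ((S (n (i + 1)) : ℚ) - S (n i)) = β * ((n (i + 1) : ℚ) - (n i : ℚ)) := by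
      intro i
      have hlt : n i < n (i + 1) := hmono (Nat.lt_succ_self i)
      have hsum := seg_sum ω (n i) (n (i + 1)) (le_of_lt hlt)
      have hlen := seg_length ω (n i) (n (i + 1))
      have hws := hslope i
      rw [wordSlope, hsum, hlen] at hws
      have hne : ((n (i + 1) - n i : ℕ) : ℚ) ≠ 0 :=
        Nat.cast_ne_zero.mpr (by omega)
      rw [div_eq_iff hne] at hws
      rw [← hS] at hws
      push_cast [Nat.cast_sub hlt.le] at hws
      linarith [hws]
    have hSn : ∀ i : ℕ, (S (n i) : ℚ) = S (n 0) + β * ((n i : ℚ) - (n 0 : ℚ)) := by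
      intro i
      induction i with
      | zero => simp
      | succ k ih =>
        have hb := hblock k
        linarith [hb, ih]
    have hnat : Filter.Tendsto n Filter.atTop Filter.atTop := hmono.tendsto_atTop
    have h1 : Filter.Tendsto (fun i => (S (n i) : ℝ) / (n i)) Filter.atTop (nhds L) :=
      hs'.comp hnat
    have h2 : Filter.Tendsto (fun i => (S (n i) : ℝ) / (n i)) Filter.atTop (nhds (β : ℝ)) := by
      have hconst : Filter.Tendsto (fun i : ℕ => ((S (n 0) : ℝ) - (β : ℝ) * (n 0)) / (n i))
          Filter.atTop (nhds 0) :=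
        (tendsto_const_div_atTop_nhds_zero_nat _).comp hnat
      have hadd := hconst.add (tendsto_const_nhds (x := (β : ℝ)) (f := Filter.atTop (α := ℕ)))
      rw [zero_add] at hadd
      apply hadd.congr'
      filter_upwards [hnat.eventually_ge_atTop 1] with i hi
      have hne : ((n i : ℝ)) ≠ 0 := by
        have : (0 : ℝ) < (n i : ℝ) := by exact_mod_cast hi.trans_lt' zero_lt_one
        linarith
      have hq := hSn i
      have hr : (S (n i) : ℝ) = (S (n 0) : ℝ) + (β : ℝ) * ((n i : ℝ) - (n 0 : ℝ)) := by
        exact_mod_cast hq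
      rw [hr]
      field_simp
      ring
    exact tendsto_nhds_unique h2 h1
  refine ⟨⟨?_, ?_⟩, moreover⟩
  · -- forward direction
    rintro ⟨α, hα⟩
    obtain ⟨M, hM⟩ := hb
    choose T hTcard hTmem using hM
    -- bound on the letters
    obtain ⟨K0, hK0⟩ := hfin.bddAbove
    obtain ⟨K1, hK1⟩ := hfin.bddBelow
    set K := max K0 (-K1) with hK
    have hKω : ∀ i, |ω i| ≤ K := by
      intro i
      rw [abs_le]
      constructor
      · have := hK1 ⟨i, rfl⟩
        simp only [hK]
        omega
      · have := hK0 ⟨i, rfl⟩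
        simp only [hK]
        omega
    have hK0' : (0 : ℤ) ≤ K := le_trans (abs_nonneg _) (hKω 0)
    have hsucc : ∀ m, S (m + 1) = S m + ω m := fun m => Finset.sum_range_succ ω m
    set C : ℤ := 2 * K * M with hC
    have hC0 : 0 ≤ C := by positivity
    -- window gap bound
    have hgap : ∀ n, 1 ≤ n → ∀ a b : ℕ,
        (S (b + n) - S b) - (S (a + n) - S a) ≤ C := by
      intro n hn a b
      set w : ℕ → ℤ := fun m => S (m + n) - S m with hw
      have hstep : ∀ j, |w (j + 1) - w j| ≤ 2 * K := by
        intro j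
        have h1 : S (j + 1 + n) = S (j + n) + ω (j + n) := by
          have : j + 1 + n = (j + n) + 1 := by omega
          rw [this, hsucc]
        have h2 : S (j + 1) = S j + ω j := hsucc j
        have e : w (j + 1) - w j = ω (j + n) - ω j := by
          simp only [hw, h1, h2]; ring
        rw [e]
        calc |ω (j + n) - ω j| ≤ |ω (j + n)| + |ω j| := abs_sub _ _
          _ ≤ 2 * K := by have := hKω (j + n); have := hKω j; omega
      have hTmem' : ∀ m, w m ∈ T n hn := by
        intro m
        have hfac := seg_factor ω m (m + n)
        have hlen : (seg ω m (m + n)).length = n := by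
          rw [seg_length]; omega
        have := hTmem n hn _ hfac hlen
        rwa [seg_sum ω m (m + n) (by omega)] at this
      have := gap_abs (by positivity) hstep hTmem' a b
      have hcard : (T n hn).card ≤ M := hTcard n hn
      have : (2 : ℤ) * K * ((T n hn).card : ℤ) ≤ 2 * K * M := by
        apply mul_le_mul_of_nonneg_left _ (by positivity)
        exact_mod_cast hcard
      simp only [hw] at *
      omega
    have hS0 : S 0 = 0 := by simp [hS, pS]
    -- iterated bound
    have hmul : ∀ n, 1 ≤ n → ∀ k : ℕ,
        (k : ℤ) * (S n - C) ≤ S (k * n) ∧ S (k * n) ≤ (k : ℤ) * (S n + C) := by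
      intro n hn k
      induction k with
      | zero => simp [hS0]
      | succ k ih =>
        have h1 := hgap n hn 0 (k * n)
        have h2 := hgap n hn (k * n) 0
        have he : (k + 1) * n = k * n + n := by ring
        rw [he]
        simp only [zero_add, hS0, sub_zero] at h1 h2
        push_cast
        constructor
        · nlinarith [ih.1]
        · nlinarith [ih.2]
    -- discrepancy bound for prefixes
    have hdisc : ∀ n : ℕ, 1 ≤ n → |(S n : ℝ) - n * L| ≤ (C : ℝ) := by
      intro n hn
      have hnR : (0 : ℝ) < n := by exact_mod_cast hn
      have htk : Filter.Tendsto (fun k : ℕ => k * n) Filter.atTop Filter.atTop := by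
        apply Filter.tendsto_atTop_mono (fun k => Nat.le_mul_of_pos_right k (by omega))
        exact Filter.tendsto_id
      have hu : Filter.Tendsto (fun k : ℕ => (S (k * n) : ℝ) / (k * n))
          Filter.atTop (nhds L) := by
        have h := hs'.comp htk
        apply h.congr
        intro k
        simp only [Function.comp]
        push_cast
        ring
      have hlow : ((S n : ℝ) - C) / n ≤ L := by
        apply ge_of_tendsto hu
        filter_upwards [Filter.eventually_ge_atTop 1] with k hk
        have hkR : (0 : ℝ) < k := by exact_mod_cast hk
        have hb := (hmul n hn k).1
        have hbR : (k : ℝ) * ((S n : ℝ) - C) ≤ (S (k * n) : ℝ) := by exact_mod_cast hb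
        rw [div_le_div_iff₀ hnR (by positivity)]
        push_cast
        nlinarith
      have hhigh : L ≤ ((S n : ℝ) + C) / n := by
        apply le_of_tendsto hu
        filter_upwards [Filter.eventually_ge_atTop 1] with k hk
        have hkR : (0 : ℝ) < k := by exact_mod_cast hk
        have hb := (hmul n hn k).2
        have hbR : (S (k * n) : ℝ) ≤ (k : ℝ) * ((S n : ℝ) + C) := by exact_mod_cast hb
        rw [div_le_div_iff₀ (by positivity) hnR]
        push_cast
        nlinarith
      rw [abs_le]
      rw [div_le_iff₀ hnR] at hlow
      rw [le_div_iff₀ hnR] at hhigh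
      constructor <;> nlinarith
    -- pigeonhole on S m * den - m * num
    set z : ℕ → ℤ := fun m => S m * α.den - m * α.num with hz
    have hden0 : ((α.den : ℝ)) ≠ 0 := by
      exact_mod_cast α.den_nz
    have hzbound : ∀ m, |z m| ≤ C * α.den := by
      intro m
      rcases Nat.eq_zero_or_pos m with rfl | hm
      · simp only [hz, hS0]
        simp
        positivity
      · have h1 := hdisc m hm
        have hnum : (α.num : ℝ) = L * α.den := by
          rw [← hα, Rat.cast_def]
          field_simp
        have hzr : (z m : ℝ) = ((S m : ℝ) - m * L) * α.den := by
          simp only [hz]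
          push_cast
          rw [hnum]
          ring
        have : |(z m : ℝ)| ≤ (C : ℝ) * α.den := by
          rw [hzr, abs_mul, abs_of_nonneg (by positivity : (0:ℝ) ≤ (α.den : ℝ))]
          apply mul_le_mul_of_nonneg_right h1 (by positivity)
        exact_mod_cast this
    have hfib : ∃ c : ℤ, {m : ℕ | z m = c}.Infinite := by
      set Tz : Set ℤ := Set.Icc (-(C * α.den)) (C * α.den) with hTz
      have hTzf : Tz.Finite := Set.finite_Icc _ _
      haveI := hTzf.to_subtype
      have hmem : ∀ m, z m ∈ Tz := by
        intro m
        rw [hTz, Set.mem_Icc]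
        have := abs_le.mp (hzbound m)
        exact this
      obtain ⟨c, hc⟩ := Finite.exists_infinite_fiber (fun m : ℕ => (⟨z m, hmem m⟩ : Tz))
      refine ⟨c.1, ?_⟩
      rw [Set.infinite_coe_iff] at hc
      have he : (fun m : ℕ => (⟨z m, hmem m⟩ : Tz)) ⁻¹' {c} = {m : ℕ | z m = c.1} := by
        ext m
        simp [Subtype.ext_iff]
      rwa [he] at hc
    obtain ⟨c, hc⟩ := hfib
    set p : ℕ → Prop := fun m => z m = c with hp
    have hpc : (setOf p).Infinite := hc
    set n : ℕ → ℕ := fun i => Nat.nth p i with hn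
    have hmono : StrictMono n := Nat.nth_strictMono hpc
    have hnmem : ∀ i, z (n i) = c := fun i => Nat.nth_mem_of_infinite hpc i
    have hαslope : ∀ i, wordSlope (seg ω (n i) (n (i + 1))) = α := by
      intro i
      have hlt : n i < n (i + 1) := hmono (Nat.lt_succ_self i)
      have hkey : (S (n (i + 1)) - S (n i)) * α.den = ((n (i + 1) : ℤ) - n i) * α.num := by
        have h1 := hnmem i
        have h2 := hnmem (i + 1)
        simp only [hz] at h1 h2
        nlinarith [h1, h2]
      rw [wordSlope, seg_sum ω _ _ hlt.le, seg_length]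
      have hne : ((n (i + 1) - n i : ℕ) : ℚ) ≠ 0 := Nat.cast_ne_zero.mpr (by omega)
      rw [div_eq_iff hne]
      have hkeyQ : ((S (n (i + 1)) : ℚ) - S (n i)) * α.den = ((n (i + 1) : ℚ) - n i) * α.num := by
        exact_mod_cast hkey
      have hdenQ : ((α.den : ℚ)) ≠ 0 := Nat.cast_ne_zero.mpr α.den_nz
      rw [← Rat.num_div_den α]
      push_cast [Nat.cast_sub hlt.le]
      field_simp
      linarith [hkeyQ]
    refine ⟨n, hmono, ?_⟩
    intro i
    rw [hαslope i, hαslope 0]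
  · rintro ⟨n, hmono, hslope⟩
    exact ⟨wordSlope (seg ω (n 0) (n 1)), moreover n hmono hslope⟩
end
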